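/- Let ρ < 0 be a real number. If a word w with |w| > 2 is ρ-avoided in x, then f(w_i) ≥ 2, i.e., the infix w_i is a repeated factor of x. -/

import Mathlib

/-- The observed frequency `f(w)`: the number of starting positions at which
the word `w` occurs in the word `x` (occurrences may overlap). -/
def occ {α : Type*} [DecidableEq α] (x w : List α) : ℕ :=
  ((Finset.range (x.length + 1)).filter (fun i => (x.drop i).take w.length = w)).card

/-- The expected frequency `E(w)` of `w` in `x`:
`E(w) = f(w_p)·f(w_s)/f(w_i)` if `f(w_i) > 0`, and `E(w) = 0` otherwise,
where `w_p = w.dropLast` is the longest proper prefix of `w`,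
`w_s = w.tail` is the longest proper suffix of `w`, and
`w_i = w.tail.dropLast` is the infix of `w` obtained by deleting its
first and last letters. -/
noncomputable def expFreq {α : Type*} [DecidableEq α] (x w : List α) : ℝ :=
  if 0 < occ x w.tail.dropLast then
    ((occ x w.dropLast : ℝ) * (occ x w.tail : ℝ)) / (occ x w.tail.dropLast : ℝ)
  else 0

/-- The standard deviation `std(w) = (f(w) − E(w)) / max(√E(w), 1)`. -/
noncomputable def stdDev {α : Type*} [DecidableEq α] (x w : List α) : ℝ :=
  ((occ x w : ℝ) - expFreq x w) / max (Real.sqrt (expFreq x w)) 1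

/-- `w` is a minimal absent word of `x`: `w` is absent from `x`
(`f(w) = 0`) and every proper factor of `w` occurs in `x`. -/
def IsMAW {α : Type*} [DecidableEq α] (x w : List α) : Prop :=
  occ x w = 0 ∧ ∀ v : List α, v <:+: w → v ≠ w → 0 < occ x v

namespace Stmt8Aux

variable {α : Type*} [DecidableEq α]

/-- The occurrence set. -/
def P (x w : List α) : Finset ℕ :=
  (Finset.range (x.length + 1)).filter (fun i => (x.drop i).take w.length = w)

lemma occ_eq_card (x w : List α) : occ x w = (P x w).card := rfl

omit [DecidableEq α] in
lemma mem_P {x w : List α} {i : ℕ} [DecidableEq α] :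
    i ∈ P x w ↔ i < x.length + 1 ∧ (x.drop i).take w.length = w := by
  simp [P]

omit [DecidableEq α] in
lemma len_le_of_occ {x w : List α} {i : ℕ} (hw : w ≠ [])
    (h : (x.drop i).take w.length = w) : i + w.length ≤ x.length := by
  have hl := congrArg List.length h
  simp only [List.length_take, List.length_drop] at hl
  have h1 : w.length ≤ x.length - i := by
    have := min_le_right w.length (x.length - i)
    omega
  have h0 : 0 < w.length := List.length_pos_iff.2 hw
  omega

/-- prefix occurrences map into infix occurrences via `+1`. -/
lemma prefix_to_infix {x w : List α} (hw : 2 < w.length) {j : ℕ}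
    (hj : j ∈ P x w.dropLast) : j + 1 ∈ P x w.tail.dropLast := by
  obtain ⟨hjlt, hocc⟩ := mem_P.1 hj
  have hplen : w.dropLast.length = w.length - 1 := List.length_dropLast
  have hpne : w.dropLast ≠ [] := by
    intro h; have := congrArg List.length h; simp [hplen] at this; omega
  have hle := len_le_of_occ hpne hocc
  have hilen : w.tail.dropLast.length = w.length - 2 := by
    simp only [List.length_dropLast, List.length_tail]; omega
  have key : w.tail.dropLast = w.dropLast.tail := by
    simp [List.dropLast_eq_take, ← List.drop_one, List.drop_take, List.length_tail]
  refine mem_P.2 ⟨by rw [hplen] at hle; omega, ?_⟩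
  have : (x.drop (j+1)).take (w.length - 2) = w.dropLast.tail := by
    rw [← List.drop_one, ← hocc, List.drop_take, List.drop_drop]
    congr 1
    all_goals omega
  rw [hilen, this, key]

/-- suffix occurrences are infix occurrences. -/
lemma suffix_to_infix {x w : List α} (hw : 2 < w.length) {k : ℕ}
    (hk : k ∈ P x w.tail) : k ∈ P x w.tail.dropLast := by
  obtain ⟨hklt, hocc⟩ := mem_P.1 hk
  have hslen : w.tail.length = w.length - 1 := List.length_tail
  have hilen : w.tail.dropLast.length = w.length - 2 := by
    simp only [List.length_dropLast, List.length_tail]; omega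
  refine mem_P.2 ⟨hklt, ?_⟩
  have key : w.tail.dropLast = ((x.drop k).take w.tail.length).take (w.length - 2) := by
    rw [hocc, List.dropLast_eq_take, hslen]
    congr 1
    all_goals omega
  rw [hilen, key, List.take_take]
  congr 1
  rw [hslen]
  omega

lemma occ_prefix_le (x w : List α) (hw : 2 < w.length) :
    occ x w.dropLast ≤ occ x w.tail.dropLast := by
  rw [occ_eq_card, occ_eq_card]
  apply Finset.card_le_card_of_injOn (fun j => j + 1)
  · exact fun j hj => prefix_to_infix hw hj
  · intro a _ b _ h; simpa using h

lemma occ_suffix_le (x w : List α) (hw : 2 < w.length) :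
    occ x w.tail ≤ occ x w.tail.dropLast := by
  rw [occ_eq_card, occ_eq_card]
  apply Finset.card_le_card_of_injOn id
  · exact fun k hk => suffix_to_infix hw hk
  · intro a _ b _ h; exact h

/-- if the infix occurs exactly once and both the prefix and suffix occur, then w occurs. -/
lemma glue {x w : List α} (hw : 2 < w.length)
    (hi : occ x w.tail.dropLast = 1)
    (hp : 0 < occ x w.dropLast) (hs : 0 < occ x w.tail) :
    0 < occ x w := by
  rw [occ_eq_card] at hp hs hi ⊢
  obtain ⟨j, hj⟩ := Finset.card_pos.1 hp
  obtain ⟨k, hk⟩ := Finset.card_pos.1 hs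
  have hj1 := prefix_to_infix hw hj
  have hk1 := suffix_to_infix hw hk
  have heq : j + 1 = k := Finset.card_le_one.1 hi.le _ hj1 _ hk1
  obtain ⟨hjlt, hoccp⟩ := mem_P.1 hj
  obtain ⟨hklt, hoccs⟩ := mem_P.1 hk
  subst heq
  apply Finset.card_pos.2
  refine ⟨j, ?_⟩
  have hplen : w.dropLast.length = w.length - 1 := List.length_dropLast
  have hslen : w.tail.length = w.length - 1 := List.length_tail
  rw [hplen] at hoccp
  rw [hslen] at hoccs
  have hle : j + (w.length - 1) ≤ x.length := by
    have hpne : w.dropLast ≠ [] := by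
      intro h; have := congrArg List.length h; simp [hplen] at this; omega
    have := len_le_of_occ hpne (by rw [hplen]; exact hoccp)
    omega
  refine mem_P.2 ⟨by omega, ?_⟩
  have h1 : (List.take w.length (List.drop j x)).take 1 = w.take 1 := by
    have a1 : (List.take w.length (List.drop j x)).take 1
        = (List.take (w.length - 1) (List.drop j x)).take 1 := by
      rw [List.take_take, List.take_take, min_eq_left (by omega), min_eq_left (by omega)]
    rw [a1, hoccp, List.dropLast_eq_take, List.take_take, min_eq_left (by omega)]
  have h2 : (List.take w.length (List.drop j x)).drop 1 = w.drop 1 := by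
    rw [List.drop_take, List.drop_drop, List.drop_one]
    exact hoccs
  calc List.take w.length (List.drop j x)
      = (List.take w.length (List.drop j x)).take 1
        ++ (List.take w.length (List.drop j x)).drop 1 :=
        (List.take_append_drop 1 _).symm
    _ = w.take 1 ++ w.drop 1 := by rw [h1, h2]
    _ = w := List.take_append_drop 1 w

end Stmt8Aux

/-- Let `ρ < 0`. If a word `w` with `|w| > 2` is `ρ`-avoided in `x`,
then `f(w_i) ≥ 2`, i.e., the infix `w_i` is a repeated factor of `x`. -/
theorem stmt_8 {α : Type*} [DecidableEq α] (ρ : ℝ) (hρ : ρ < 0)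
    (x w : List α) (hw : 2 < w.length) (hav : stdDev x w ≤ ρ) :
    2 ≤ occ x w.tail.dropLast := by
  by_contra hlt
  push_neg at hlt
  -- occ x w.tail.dropLast ≤ 1
  have hρ' : stdDev x w < 0 := lt_of_le_of_lt hav hρ
  have hmax : (1:ℝ) ≤ max (Real.sqrt (expFreq x w)) 1 := le_max_right _ _
  have hmaxpos : (0:ℝ) < max (Real.sqrt (expFreq x w)) 1 := by linarith
  have hnum : (occ x w : ℝ) - expFreq x w < 0 := by
    by_contra hnn
    push_neg at hnn
    have : 0 ≤ stdDev x w := div_nonneg hnn hmaxpos.le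
    linarith
  interval_cases hocc : occ x w.tail.dropLast
  · -- infix never occurs
    have hE : expFreq x w = 0 := by
      rw [expFreq, if_neg]
      omega
    rw [hE] at hnum
    have : (0:ℝ) ≤ (occ x w : ℝ) := Nat.cast_nonneg _
    linarith
  · -- infix occurs once
    have hp1 : occ x w.dropLast ≤ 1 := by
      have := Stmt8Aux.occ_prefix_le x w hw; omega
    have hs1 : occ x w.tail ≤ 1 := by
      have := Stmt8Aux.occ_suffix_le x w hw; omega
    rcases Nat.eq_zero_or_pos (occ x w.dropLast) with hp0 | hpp
    · have hE : expFreq x w = 0 := by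
        rw [expFreq, if_pos (by omega), hocc, hp0]
        norm_num
      rw [hE] at hnum
      have : (0:ℝ) ≤ (occ x w : ℝ) := Nat.cast_nonneg _
      linarith
    rcases Nat.eq_zero_or_pos (occ x w.tail) with hs0 | hsp
    · have hE : expFreq x w = 0 := by
        rw [expFreq, if_pos (by omega), hocc, hs0]
        norm_num
      rw [hE] at hnum
      have : (0:ℝ) ≤ (occ x w : ℝ) := Nat.cast_nonneg _
      linarith
    have hpe : occ x w.dropLast = 1 := by omega
    have hse : occ x w.tail = 1 := by omega
    have hE : expFreq x w = 1 := by
      rw [expFreq, if_pos (by omega), hocc, hpe, hse]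
      norm_num
    have hwocc : 0 < occ x w := Stmt8Aux.glue hw hocc hpp hsp
    rw [hE] at hnum
    have : (1:ℝ) ≤ (occ x w : ℝ) := by exact_mod_cast hwocc
    linarith
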